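/- If a guard P g with g < a sees both endpoints P a and P b of an interval [a, b] on which T is affine, then P g sees every point P c with c ∈ [a, b]. (A guard covering both endpoints of an edge covers the entire edge.) -/

import Mathlib

def Sees (T : ℝ → ℝ) (x y : ℝ) : Prop :=
  ∀ t ∈ Set.Icc (0:ℝ) 1, (1 - t) * T x + t * T y ≥ T ((1 - t) * x + t * y)

theorem guard_sees_whole_edge (T : ℝ → ℝ) (g a b : ℝ)
    (hga : g < a) (hab : a < b)
    (haff : ∃ m c : ℝ, ∀ x ∈ Set.Icc a b, T x = m * x + c)
    (hsa : Sees T g a) (hsb : Sees T g b) :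
    ∀ c ∈ Set.Icc a b, Sees T g c := by
  obtain ⟨m, k, hmk⟩ := haff
  have hTa : T a = m * a + k := hmk a ⟨le_refl a, hab.le⟩
  have hTb : T b = m * b + k := hmk b ⟨hab.le, le_refl b⟩
  have hag : (0:ℝ) < a - g := by linarith
  have hbg : (0:ℝ) < b - g := by linarith
  -- key: the guard lies on or above the extended line of the edge
  have hkey : T g ≥ m * g + k := by
    set t0 : ℝ := (a - g) / (b - g) with ht0def
    have ht0 : t0 ∈ Set.Icc (0:ℝ) 1 := by
      constructor
      · positivity
      · rw [ht0def, div_le_one hbg]; linarith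
    have h := hsb t0 ht0
    have hx : (1 - t0) * g + t0 * b = a := by
      rw [ht0def]; field_simp; ring
    rw [hx, hTa, hTb] at h
    have e : (1 - t0) * T g + t0 * (m * b + k)
        = ((b - a) * T g + (a - g) * (m * b + k)) / (b - g) := by
      rw [ht0def]; field_simp; ring
    rw [e, ge_iff_le, le_div_iff₀ hbg] at h
    nlinarith [h, hab]
  intro c hc t ht
  obtain ⟨hac, hcb⟩ := hc
  obtain ⟨ht0, ht1⟩ := ht
  have hTc : T c = m * c + k := hmk c ⟨hac, hcb⟩
  set x : ℝ := (1 - t) * g + t * c with hxdef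
  have hgx : g ≤ x := by nlinarith
  have hxc : x ≤ c := by nlinarith
  rcases le_or_gt a x with hax | hxa
  · -- x in [a, b]
    have hTx : T x = m * x + k := hmk x ⟨hax, by linarith⟩
    rw [hTx, hTc, hxdef]
    nlinarith
  · -- x in [g, a)
    set u : ℝ := (x - g) / (a - g) with hudef
    have hu0 : 0 ≤ u := div_nonneg (by linarith) hag.le
    have hu1 : u ≤ 1 := by rw [hudef, div_le_one hag]; linarith
    have h := hsa u ⟨hu0, hu1⟩
    have hmul : u * (a - g) = t * (c - g) := by
      rw [hudef]; field_simp; rw [hxdef]; ring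
    have hy : (1 - u) * g + u * a = x := by
      rw [hudef]; field_simp; ring
    rw [hy, hTa] at h
    have hut : t ≤ u := by nlinarith
    have hmul2 : m * (u * (a - g)) = m * (t * (c - g)) := by rw [hmul]
    rw [hTc]
    nlinarith [mul_nonneg (sub_nonneg.mpr hut) (sub_nonneg.mpr hkey), hmul2, h]
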